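/- Suppose the primal feasible set X(b) is nonempty. Then the recession cone of X(b), namely {r ∈ E : x + μ r ∈ X(b) for all x ∈ X(b) and all μ ≥ 0}, equals {x ∈ C : A x ∈ −K} and equals the polar cone of C_d := A*(K*) − C*; moreover the polar cone of this recession cone equals the closure of C_d. Furthermore, with rec X denoting this recession cone, one has the inclusions and equalities: (rec X)° ⊇ {c ∈ E : Y(c) is almost feasible} ⊇ relint((rec X)°) = relint(C_d) = {c ∈ E : there exists y ∈ relint K* with A* y − c ∈ relint C*}. -/

import Mathlib

open RealInnerProductSpace Set Pointwise

variable {E E' : Type*}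
  [NormedAddCommGroup E] [InnerProductSpace ℝ E] [FiniteDimensional ℝ E]
  [NormedAddCommGroup E'] [InnerProductSpace ℝ E'] [FiniteDimensional ℝ E']


section RelintToolkit

variable {V : Type*} [NormedAddCommGroup V] [NormedSpace ℝ V]

lemma mem_relint {s : Set V} {x : V} :
    x ∈ intrinsicInterior ℝ s ↔
      x ∈ affineSpan ℝ s ∧ ∃ ε > (0:ℝ), ∀ w ∈ affineSpan ℝ s, dist w x < ε → w ∈ s := by
  rw [mem_intrinsicInterior]
  constructor
  · rintro ⟨y, hy, rfl⟩
    refine ⟨y.2, ?_⟩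
    rw [mem_interior_iff_mem_nhds, Metric.mem_nhds_iff] at hy
    obtain ⟨ε, hε, hball⟩ := hy
    refine ⟨ε, hε, fun w hw hdist => ?_⟩
    exact hball (show (⟨w, hw⟩ : affineSpan ℝ s) ∈ Metric.ball y ε by
      rw [Metric.mem_ball, Subtype.dist_eq]; exact hdist)
  · rintro ⟨hx, ε, hε, h⟩
    refine ⟨⟨x, hx⟩, ?_, rfl⟩
    rw [mem_interior_iff_mem_nhds, Metric.mem_nhds_iff]
    exact ⟨ε, hε, fun w hw => h w.1 w.2 (by rwa [Metric.mem_ball, Subtype.dist_eq] at hw)⟩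

lemma combo_mem_span {Q : AffineSubspace ℝ V} {x y : V} (hx : x ∈ Q) (hy : y ∈ Q) (μ : ℝ) :
    μ • x + (1 - μ) • y ∈ Q := by
  have h := Q.smul_vsub_vadd_mem μ hx hy hy
  have : μ • (x -ᵥ y) +ᵥ y = μ • x + (1 - μ) • y := by
    simp only [vsub_eq_sub, vadd_eq_add]; module
  rwa [this] at h

variable [FiniteDimensional ℝ V]


lemma closure_subset_span {s : Set V} : closure s ⊆ affineSpan ℝ s := by
  rw [← intrinsicClosure_eq_closure ℝ]
  exact intrinsicClosure_subset_affineSpan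

lemma segment_principle {s : Set V} (hs : Convex ℝ s) {x y : V}
    (hx : x ∈ intrinsicInterior ℝ s) (hy : y ∈ closure s) {t : ℝ} (ht0 : 0 < t) (ht1 : t ≤ 1) :
    t • x + (1 - t) • y ∈ intrinsicInterior ℝ s := by
  rw [mem_relint] at hx ⊢
  obtain ⟨hxA, ε, hε, hball⟩ := hx
  have hyA : y ∈ affineSpan ℝ s := closure_subset_span hy
  refine ⟨combo_mem_span hxA hyA t, t * ε / 2, by positivity, fun w hw hdist => ?_⟩
  -- pick y' ∈ s close to y
  obtain ⟨y', hy's, hy'dist⟩ := Metric.mem_closure_iff.1 hy (t * ε / 4) (by positivity)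
  have ht : t ≠ 0 := ne_of_gt ht0
  set u := (1/t) • w + (1 - 1/t) • y' with hu
  have hy'A : y' ∈ affineSpan ℝ s := subset_affineSpan ℝ s hy's
  have huA : u ∈ affineSpan ℝ s := combo_mem_span hw hy'A _
  have hus : u ∈ s := by
    refine hball u huA ?_
    have hux : u - x = (1/t) • ((w - (t • x + (1 - t) • y)) + (1 - t) • (y - y')) := by
      rw [hu]; match_scalars <;> field_simp <;> ring
    have h1 : ‖u - x‖ ≤ (1/t) * (‖w - (t • x + (1 - t) • y)‖ + (1 - t) * ‖y - y'‖) := by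
      rw [hux, norm_smul]
      have : ‖(w - (t • x + (1 - t) • y)) + (1 - t) • (y - y')‖
          ≤ ‖w - (t • x + (1 - t) • y)‖ + (1 - t) * ‖y - y'‖ := by
        refine (norm_add_le _ _).trans ?_
        rw [norm_smul, Real.norm_eq_abs, abs_of_nonneg (by linarith)]
      calc ‖(1/t)‖ * ‖(w - (t • x + (1 - t) • y)) + (1 - t) • (y - y')‖
          ≤ ‖(1/t)‖ * (‖w - (t • x + (1 - t) • y)‖ + (1 - t) * ‖y - y'‖) := by
            exact mul_le_mul_of_nonneg_left this (norm_nonneg _)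
        _ = (1/t) * (‖w - (t • x + (1 - t) • y)‖ + (1 - t) * ‖y - y'‖) := by
            rw [Real.norm_eq_abs, abs_of_pos (by positivity)]
    rw [dist_eq_norm]
    have hwz : ‖w - (t • x + (1 - t) • y)‖ < t * ε / 2 := by rwa [dist_eq_norm] at hdist
    have hyy' : ‖y - y'‖ < t * ε / 4 := by
      rw [← dist_eq_norm]; exact hy'dist
    have h2 : (1 - t) * ‖y - y'‖ ≤ ‖y - y'‖ := by
      nlinarith [norm_nonneg (y - y')]
    calc ‖u - x‖ ≤ (1/t) * (‖w - (t • x + (1 - t) • y)‖ + (1 - t) * ‖y - y'‖) := h1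
      _ < (1/t) * (t * ε / 2 + t * ε / 4) := by
          apply mul_lt_mul_of_pos_left _ (by positivity)
          linarith
      _ < ε := by rw [div_mul_eq_mul_div, one_mul]; rw [div_lt_iff₀ ht0]; nlinarith
  have : w = t • u + (1 - t) • y' := by
    rw [hu]; match_scalars <;> field_simp <;> ring
  rw [this]
  exact hs hus hy's (le_of_lt ht0) (by linarith) (by ring)

lemma prolong {s : Set V} {x y : V} (hx : x ∈ intrinsicInterior ℝ s) (hy : y ∈ s) :
    ∃ μ > (1:ℝ), μ • x + (1 - μ) • y ∈ s := by
  rw [mem_relint] at hx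
  obtain ⟨hxA, ε, hε, hball⟩ := hx
  set μ := 1 + ε / (2 * (dist x y + 1)) with hμ
  have hd : (0:ℝ) < dist x y + 1 := by positivity
  have hμ1 : 1 < μ := by
    have : 0 < ε / (2 * (dist x y + 1)) := by positivity
    rw [hμ]; linarith
  refine ⟨μ, hμ1, ?_⟩
  have hyA : y ∈ affineSpan ℝ s := subset_affineSpan ℝ s hy
  refine hball _ (combo_mem_span hxA hyA μ) ?_
  have : μ • x + (1 - μ) • y - x = (μ - 1) • (x - y) := by module
  rw [dist_eq_norm, this, norm_smul, Real.norm_eq_abs, abs_of_pos (by linarith), ← dist_eq_norm]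
  have : (μ - 1) * dist x y = ε / (2 * (dist x y + 1)) * dist x y := by rw [hμ]; ring
  rw [this]
  rw [div_mul_eq_mul_div, div_lt_iff₀ (by positivity)]
  nlinarith [dist_nonneg (x := x) (y := y)]

lemma relint_convex {s : Set V} (hs : Convex ℝ s) : Convex ℝ (intrinsicInterior ℝ s) := by
  intro x hx y hy a b ha hb hab
  rcases eq_or_lt_of_le ha with ha0 | ha0
  · have : b = 1 := by linarith
    simp [← ha0, this, hy]
  · have hb1 : b = 1 - a := by linarith
    rw [hb1]
    exact segment_principle hs hx (subset_closure (intrinsicInterior_subset hy)) ha0 (by linarith)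

lemma relint_of_prolong {s : Set V} (hs : Convex ℝ s) {z : V} (hz : z ∈ s)
    (h : ∀ y ∈ s, ∃ μ > (1:ℝ), μ • z + (1 - μ) • y ∈ s) : z ∈ intrinsicInterior ℝ s := by
  obtain ⟨x, hx⟩ := Set.Nonempty.intrinsicInterior hs ⟨z, hz⟩
  obtain ⟨μ, hμ, hp⟩ := h x (intrinsicInterior_subset hx)
  have key := segment_principle hs hx (subset_closure hp) (t := 1 - 1/μ)
    (by rw [sub_pos]; rw [div_lt_one (by linarith)]; linarith)
    (by have : 0 < 1/μ := by positivity
        linarith)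
  have hμ0 : μ ≠ 0 := by positivity
  have : (1 - 1/μ) • x + (1 - (1 - 1/μ)) • (μ • z + (1 - μ) • x) = z := by
    match_scalars <;> field_simp <;> ring
  rwa [this] at key

lemma relint_iff {s : Set V} (hs : Convex ℝ s) {z : V} :
    z ∈ intrinsicInterior ℝ s ↔
      z ∈ s ∧ ∀ y ∈ s, ∃ μ > (1:ℝ), μ • z + (1 - μ) • y ∈ s :=
  ⟨fun h => ⟨intrinsicInterior_subset h, fun _ hy => prolong h hy⟩,
   fun ⟨hz, h⟩ => relint_of_prolong hs hz h⟩

lemma span_closure_eq {s : Set V} : affineSpan ℝ (closure s) = affineSpan ℝ s := by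
  rw [← intrinsicClosure_eq_closure ℝ]
  exact affineSpan_intrinsicClosure s

lemma relint_closure_eq {s : Set V} (hs : Convex ℝ s) :
    intrinsicInterior ℝ (closure s) = intrinsicInterior ℝ s := by
  rcases s.eq_empty_or_nonempty with rfl | hne
  · simp
  ext z
  constructor
  · intro hz
    obtain ⟨x, hx⟩ := Set.Nonempty.intrinsicInterior hs hne
    rw [mem_relint] at hz
    obtain ⟨hzA, ε, hε, hball⟩ := hz
    rcases eq_or_ne z x with rfl | hzx
    · exact hx
    · set μ := min (ε / (2 * ‖z - x‖)) 1 with hμdef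
      have hzx' : (0:ℝ) < ‖z - x‖ := by
        rw [norm_pos_iff, sub_ne_zero]; exact hzx
      have hμ0 : 0 < μ := lt_min (by positivity) one_pos
      set y := z + μ • (z - x) with hy
      have hzA' : z ∈ affineSpan ℝ s := by rwa [span_closure_eq] at hzA
      have hxA : x ∈ affineSpan ℝ s :=
        subset_affineSpan ℝ s (intrinsicInterior_subset hx)
      have hyA : y ∈ affineSpan ℝ (closure s) := by
        rw [span_closure_eq]
        have := combo_mem_span hzA' hxA (1 + μ)
        have he : (1 + μ) • z + (1 - (1 + μ)) • x = y := by rw [hy]; module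
        rwa [he] at this
      have hycl : y ∈ closure s := by
        refine hball y hyA ?_
        rw [dist_eq_norm, hy]
        have : z + μ • (z - x) - z = μ • (z - x) := by module
        rw [this, norm_smul, Real.norm_eq_abs, abs_of_pos hμ0]
        calc μ * ‖z - x‖ ≤ (ε / (2 * ‖z - x‖)) * ‖z - x‖ :=
              mul_le_mul_of_nonneg_right (min_le_left _ _) (norm_nonneg _)
          _ = ε / 2 := by field_simp
          _ < ε := by linarith
      have key := segment_principle hs hx hycl (t := μ / (1 + μ))
        (by positivity) (by rw [div_le_one (by linarith)]; linarith)
      have he : (μ / (1 + μ)) • x + (1 - μ / (1 + μ)) • y = z := by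
        rw [hy]
        have h1μ : (1 + μ) ≠ 0 := by positivity
        match_scalars <;> field_simp <;> ring
      rwa [he] at key
  · intro hz
    rw [mem_relint] at hz ⊢
    obtain ⟨hzA, ε, hε, hball⟩ := hz
    rw [span_closure_eq]
    exact ⟨hzA, ε, hε, fun w hw hd => subset_closure (hball w hw hd)⟩

lemma subset_closure_relint {s : Set V} (hs : Convex ℝ s) :
    s ⊆ closure (intrinsicInterior ℝ s) := by
  intro y hy
  obtain ⟨x, hx⟩ := Set.Nonempty.intrinsicInterior hs ⟨y, hy⟩
  have htend : Filter.Tendsto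
      (fun n : ℕ => ((1:ℝ) / ((n:ℝ) + 1)) • x + ((1:ℝ) - 1 / ((n:ℝ) + 1)) • y)
      Filter.atTop (nhds y) := by
    have h0 : Filter.Tendsto (fun n : ℕ => (1:ℝ) / ((n:ℝ) + 1)) Filter.atTop (nhds 0) :=
      tendsto_one_div_add_atTop_nhds_zero_nat
    have h1 : Filter.Tendsto (fun n : ℕ => (1:ℝ) - 1 / ((n:ℝ) + 1)) Filter.atTop (nhds 1) := by
      have := (tendsto_const_nhds (x := (1:ℝ)) (f := Filter.atTop (α := ℕ))).sub h0
      simpa using this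
    have := (h0.smul_const x).add (h1.smul_const y)
    simpa using this
  refine mem_closure_of_tendsto htend (Filter.Eventually.of_forall fun n => ?_)
  have hn : (0:ℝ) < (n:ℝ) + 1 := by positivity
  exact segment_principle hs hx (subset_closure hy) (by positivity)
    (by rw [div_le_one hn]; linarith [Nat.cast_nonneg (α := ℝ) n])

lemma interp_mem {s : Set V} (hs : Convex ℝ s) {a y : V} (ha : a ∈ s) {μ ν : ℝ}
    (h1 : 1 ≤ μ) (hμν : μ ≤ ν) (hν : ν • a + (1 - ν) • y ∈ s) :
    μ • a + (1 - μ) • y ∈ s := by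
  rcases eq_or_lt_of_le (h1.trans hμν) with hν1 | hν1
  · have hμ1 : μ = 1 := le_antisymm (hμν.trans hν1.symm.le) h1
    rw [hμ1]
    simpa using ha
  · have hlam : (μ - 1) / (ν - 1) ∈ Set.Icc (0:ℝ) 1 := by
      constructor
      · apply div_nonneg <;> linarith
      · rw [div_le_one (by linarith)]; linarith
    have key := hs ha hν (by linarith [hlam.2] : (0:ℝ) ≤ 1 - (μ - 1) / (ν - 1)) hlam.1 (by ring)
    have he : (1 - (μ - 1) / (ν - 1)) • a + ((μ - 1) / (ν - 1)) • (ν • a + (1 - ν) • y)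
        = μ • a + (1 - μ) • y := by
      have hν0 : ν - 1 ≠ 0 := by linarith
      match_scalars <;> field_simp <;> ring
    rwa [he] at key

lemma relint_linear_image {W : Type*} [NormedAddCommGroup W] [NormedSpace ℝ W]
    [FiniteDimensional ℝ W] (f : V →ₗ[ℝ] W) {s : Set V} (hs : Convex ℝ s) :
    f '' intrinsicInterior ℝ s = intrinsicInterior ℝ (f '' s) := by
  rcases s.eq_empty_or_nonempty with rfl | hne
  · simp
  apply Set.Subset.antisymm
  · rintro _ ⟨x, hx, rfl⟩
    rw [relint_iff (hs.linear_image f)]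
    refine ⟨⟨x, intrinsicInterior_subset hx, rfl⟩, ?_⟩
    rintro _ ⟨y, hy, rfl⟩
    obtain ⟨μ, hμ, hp⟩ := prolong hx hy
    exact ⟨μ, hμ, ⟨μ • x + (1 - μ) • y, hp, by simp [map_add, map_smul]⟩⟩
  · have hc : Continuous f := f.continuous_of_finiteDimensional
    have hcl : closure (f '' s) = closure (f '' intrinsicInterior ℝ s) := by
      apply Set.Subset.antisymm
      · have h1 : f '' s ⊆ closure (f '' intrinsicInterior ℝ s) :=
          (Set.image_mono (f := ⇑f) (subset_closure_relint hs)).trans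
            (image_closure_subset_closure_image hc)
        simpa using closure_mono h1
      · exact closure_mono (Set.image_mono (f := ⇑f) intrinsicInterior_subset)
    calc intrinsicInterior ℝ (f '' s)
        = intrinsicInterior ℝ (closure (f '' s)) := (relint_closure_eq (hs.linear_image f)).symm
      _ = intrinsicInterior ℝ (closure (f '' intrinsicInterior ℝ s)) := by rw [hcl]
      _ = intrinsicInterior ℝ (f '' intrinsicInterior ℝ s) :=
          relint_closure_eq ((relint_convex hs).linear_image f)
      _ ⊆ f '' intrinsicInterior ℝ s := intrinsicInterior_subset

lemma relint_prod {W : Type*} [NormedAddCommGroup W] [NormedSpace ℝ W] [FiniteDimensional ℝ W]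
    {s : Set V} {t : Set W} (hs : Convex ℝ s) (ht : Convex ℝ t)
    (hsne : s.Nonempty) (htne : t.Nonempty) :
    intrinsicInterior ℝ (s ×ˢ t) = intrinsicInterior ℝ s ×ˢ intrinsicInterior ℝ t := by
  ext ⟨a, b⟩
  rw [relint_iff (hs.prod ht)]
  simp only [Set.mem_prod]
  rw [relint_iff hs, relint_iff ht]
  constructor
  · rintro ⟨⟨has, hbt⟩, h⟩
    obtain ⟨y₀, hy₀⟩ := hsne
    obtain ⟨w₀, hw₀⟩ := htne
    constructor
    · refine ⟨has, fun y hy => ?_⟩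
      obtain ⟨μ, hμ, hp⟩ := h (y, b) ⟨hy, hbt⟩
      exact ⟨μ, hμ, hp.1⟩
    · refine ⟨hbt, fun w hw => ?_⟩
      obtain ⟨μ, hμ, hp⟩ := h (a, w) ⟨has, hw⟩
      exact ⟨μ, hμ, hp.2⟩
  · rintro ⟨⟨has, h₁⟩, ⟨hbt, h₂⟩⟩
    refine ⟨⟨has, hbt⟩, ?_⟩
    rintro ⟨y, w⟩ ⟨hy, hw⟩
    obtain ⟨μ₁, hμ₁, hp₁⟩ := h₁ y hy
    obtain ⟨μ₂, hμ₂, hp₂⟩ := h₂ w hw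
    refine ⟨min μ₁ μ₂, lt_min hμ₁ hμ₂, ?_, ?_⟩
    · exact interp_mem hs has (le_of_lt (lt_min hμ₁ hμ₂)) (min_le_left _ _) hp₁
    · exact interp_mem ht hbt (le_of_lt (lt_min hμ₁ hμ₂)) (min_le_right _ _) hp₂

end RelintToolkit

/-- A nonempty closed convex cone containing `0`. -/
structure IsClosedConvexCone {F : Type*} [NormedAddCommGroup F] [InnerProductSpace ℝ F]
    (K : Set F) : Prop where
  closed : IsClosed K
  convex : Convex ℝ K
  smul_mem : ∀ ⦃x⦄, x ∈ K → ∀ ⦃t : ℝ⦄, 0 ≤ t → t • x ∈ K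
  zero_mem : (0 : F) ∈ K

/-- The dual cone `S* = {y : ⟨x,y⟩ ≥ 0 ∀ x ∈ S}`. -/
def dualCone {F : Type*} [NormedAddCommGroup F] [InnerProductSpace ℝ F] (S : Set F) : Set F :=
  {y | ∀ x ∈ S, 0 ≤ ⟪x, y⟫}

/-- The polar cone `S° = {y : ⟨x,y⟩ ≤ 0 ∀ x ∈ S}`. -/
def polarCone {F : Type*} [NormedAddCommGroup F] [InnerProductSpace ℝ F] (S : Set F) : Set F :=
  {y | ∀ x ∈ S, ⟪x, y⟫ ≤ 0}

/-- Primal feasible set `X(b) = {x ∈ C : b - A x ∈ K}`. -/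
def Xfeas (A : E →ₗ[ℝ] E') (K : Set E') (C : Set E) (b : E') : Set E :=
  {x | x ∈ C ∧ b - A x ∈ K}

/-- Dual feasible set `Y(c) = {y ∈ K* : A* y - c ∈ C*}`. -/
def Yfeas (A : E →ₗ[ℝ] E') (K : Set E') (C : Set E) (c : E) : Set E' :=
  {y | y ∈ dualCone K ∧ LinearMap.adjoint A y - c ∈ dualCone C}

/-- Primal optimal value `P* = sup {⟨c,x⟩ : x ∈ X(b)}`. -/
noncomputable def Pval (A : E →ₗ[ℝ] E') (K : Set E') (C : Set E) (b : E') (c : E) : ℝ :=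
  sSup ((fun x => ⟪c, x⟫) '' Xfeas A K C b)

/-- Dual optimal value `D* = inf {⟨b,y⟩ : y ∈ Y(c)}`. -/
noncomputable def Dval (A : E →ₗ[ℝ] E') (K : Set E') (C : Set E) (b : E') (c : E) : ℝ :=
  sInf ((fun y => ⟪b, y⟫) '' Yfeas A K C c)

/-- Recession cone of the primal feasible region: `{x ∈ C : A x ∈ -K}`. -/
def recXSet (A : E →ₗ[ℝ] E') (K : Set E') (C : Set E) : Set E :=
  {x | x ∈ C ∧ A x ∈ -K}

/-- Recession cone of the dual feasible region: `{y ∈ K* : A* y ∈ C*}`. -/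
def recYSet (A : E →ₗ[ℝ] E') (K : Set E') (C : Set E) : Set E' :=
  {y | y ∈ dualCone K ∧ LinearMap.adjoint A y ∈ dualCone C}

/-- `X(b)` is almost feasible. -/
def AlmostFeasX (A : E →ₗ[ℝ] E') (K : Set E') (C : Set E) (b : E') : Prop :=
  ∀ ε : ℝ, 0 < ε → ∃ bε : E', ‖bε‖ ≤ ε ∧ (Xfeas A K C (b + bε)).Nonempty

/-- `Y(c)` is almost feasible. -/
def AlmostFeasY (A : E →ₗ[ℝ] E') (K : Set E') (C : Set E) (c : E) : Prop :=
  ∀ ε : ℝ, 0 < ε → ∃ cε : E, ‖cε‖ ≤ ε ∧ (Yfeas A K C (c + cε)).Nonempty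

section ConeToolkit

variable {F : Type*} [NormedAddCommGroup F] [InnerProductSpace ℝ F]

lemma dualCone_eq_innerDualCone [CompleteSpace F] (S : Set F) :
    dualCone S = (ProperCone.innerDual S : Set F) := Set.ext fun _ => Iff.rfl

lemma zero_mem_dualCone (S : Set F) : (0 : F) ∈ dualCone S := by
  intro x _; simp

lemma dualCone_add_mem {S : Set F} {x y : F} (hx : x ∈ dualCone S) (hy : y ∈ dualCone S) :
    x + y ∈ dualCone S := fun v hv => by
  have := add_nonneg (hx v hv) (hy v hv)
  rwa [← inner_add_right] at this

lemma dualCone_smul_mem {S : Set F} {x : F} (hx : x ∈ dualCone S) {t : ℝ} (ht : 0 ≤ t) :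
    t • x ∈ dualCone S := fun v hv => by
  rw [real_inner_smul_right]
  exact mul_nonneg ht (hx v hv)

lemma dualCone_convex (S : Set F) : Convex ℝ (dualCone S) := by
  intro x hx y hy a b ha hb _
  exact dualCone_add_mem (dualCone_smul_mem hx ha) (dualCone_smul_mem hy hb)

lemma isClosed_dualCone (S : Set F) : IsClosed (dualCone S) := by
  have : dualCone S = ⋂ x ∈ S, {y : F | 0 ≤ ⟪x, y⟫} := by ext; simp [dualCone]
  rw [this]
  exact isClosed_biInter fun x _ => isClosed_le continuous_const (continuous_const.inner continuous_id)

lemma dualCone_closure (S : Set F) : dualCone (closure S) = dualCone S := by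
  apply Set.Subset.antisymm
  · exact fun y hy x hx => hy x (subset_closure hx)
  · intro y hy x hx
    have hcl : closure S ⊆ {v : F | 0 ≤ ⟪v, y⟫} := by
      apply closure_minimal hy
      have hco : Continuous fun v : F => ⟪v, y⟫ := continuous_id.inner continuous_const
      exact isClosed_le continuous_const hco
    exact hcl hx

/-- the convex cone attached to an `IsClosedConvexCone`. -/
def IsClosedConvexCone.toCone {K : Set F} (hK : IsClosedConvexCone K) : ConvexCone ℝ F where
  carrier := K
  smul_mem' := fun c hc {x} hx => hK.smul_mem hx (le_of_lt hc)
  add_mem' := fun {x} hx {y} hy => by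
    have h := hK.convex hx hy (by norm_num : (0:ℝ) ≤ 1/2) (by norm_num : (0:ℝ) ≤ 1/2) (by norm_num)
    have := hK.smul_mem h (by norm_num : (0:ℝ) ≤ 2)
    rwa [smul_add, smul_smul, smul_smul, show (2:ℝ) * (1/2) = 1 by norm_num, one_smul,
      one_smul] at this

lemma dualCone_dualCone [CompleteSpace F] {K : Set F} (hK : IsClosedConvexCone K) :
    dualCone (dualCone K) = K := by
  let P : ProperCone ℝ F := ⟨⟨⟨⟨K, fun hx hy => hK.toCone.add_mem hx hy⟩, hK.zero_mem⟩,
    fun c x hx => hK.smul_mem hx c.2⟩, hK.closed⟩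
  have h := ProperCone.innerDual_innerDual P
  exact congrArg (fun c : ProperCone ℝ F => (c : Set F)) h

lemma mem_polarCone_iff_neg {S : Set F} {y : F} : y ∈ polarCone S ↔ -y ∈ dualCone S := by
  constructor
  · intro h x hx; rw [inner_neg_right]; linarith [h x hx]
  · intro h x hx; have := h x hx; rw [inner_neg_right] at this; linarith

lemma polarCone_polarCone (S : Set F) : polarCone (polarCone S) = dualCone (dualCone S) := by
  ext c
  constructor
  · intro h x hx
    have hx' : -x ∈ polarCone S := by
      rw [mem_polarCone_iff_neg, neg_neg]; exact hx
    have := h (-x) hx'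
    rw [inner_neg_left] at this; linarith
  · intro h x hx
    rw [mem_polarCone_iff_neg] at hx
    have := h (-x) hx
    rw [inner_neg_left] at this; linarith

end ConeToolkit

section Bridge

variable {E E' : Type*}
  [NormedAddCommGroup E] [InnerProductSpace ℝ E] [FiniteDimensional ℝ E]
  [NormedAddCommGroup E'] [InnerProductSpace ℝ E'] [FiniteDimensional ℝ E']

lemma IsClosedConvexCone.add_mem' {F : Type*} [NormedAddCommGroup F] [InnerProductSpace ℝ F]
    {K : Set F} (hK : IsClosedConvexCone K) {x y : F} (hx : x ∈ K) (hy : y ∈ K) :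
    x + y ∈ K := by
  have h := hK.convex hx hy (by norm_num : (0:ℝ) ≤ 1/2) (by norm_num : (0:ℝ) ≤ 1/2) (by norm_num)
  have := hK.smul_mem h (by norm_num : (0:ℝ) ≤ 2)
  rwa [smul_add, smul_smul, smul_smul, show (2:ℝ) * (1/2) = 1 by norm_num, one_smul,
    one_smul] at this

lemma mem_sumSet {A : E →ₗ[ℝ] E'} {K : Set E'} {C : Set E} {c : E} :
    c ∈ (⇑(LinearMap.adjoint A) '' dualCone K) + (-(dualCone C)) ↔
      ∃ y ∈ dualCone K, ∃ z ∈ dualCone C, c = LinearMap.adjoint A y - z := by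
  rw [Set.mem_add]
  constructor
  · rintro ⟨u, ⟨y, hy, rfl⟩, v, hv, rfl⟩
    exact ⟨y, hy, -v, Set.mem_neg.1 hv, by abel⟩
  · rintro ⟨y, hy, z, hz, rfl⟩
    exact ⟨LinearMap.adjoint A y, ⟨y, hy, rfl⟩, -z,
      Set.mem_neg.2 (by simpa using hz), by abel⟩

lemma sumSet_convex {A : E →ₗ[ℝ] E'} {K : Set E'} {C : Set E} :
    Convex ℝ ((⇑(LinearMap.adjoint A) '' dualCone K) + (-(dualCone C))) := by
  intro p hp q hq a b ha hb hab
  rw [mem_sumSet] at hp hq ⊢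
  obtain ⟨y₁, hy₁, z₁, hz₁, rfl⟩ := hp
  obtain ⟨y₂, hy₂, z₂, hz₂, rfl⟩ := hq
  refine ⟨a • y₁ + b • y₂, dualCone_add_mem (dualCone_smul_mem hy₁ ha) (dualCone_smul_mem hy₂ hb),
    a • z₁ + b • z₂, dualCone_add_mem (dualCone_smul_mem hz₁ ha) (dualCone_smul_mem hz₂ hb), ?_⟩
  simp only [map_add, map_smul]
  module

lemma sumSet_smul_mem {A : E →ₗ[ℝ] E'} {K : Set E'} {C : Set E} {c : E}
    (hc : c ∈ (⇑(LinearMap.adjoint A) '' dualCone K) + (-(dualCone C))) {t : ℝ} (ht : 0 ≤ t) :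
    t • c ∈ (⇑(LinearMap.adjoint A) '' dualCone K) + (-(dualCone C)) := by
  rw [mem_sumSet] at hc ⊢
  obtain ⟨y, hy, z, hz, rfl⟩ := hc
  exact ⟨t • y, dualCone_smul_mem hy ht, t • z, dualCone_smul_mem hz ht, by
    simp only [map_smul]; module⟩

lemma sumSet_zero_mem {A : E →ₗ[ℝ] E'} {K : Set E'} {C : Set E} :
    (0:E) ∈ (⇑(LinearMap.adjoint A) '' dualCone K) + (-(dualCone C)) :=
  mem_sumSet.2 ⟨0, zero_mem_dualCone K, 0, zero_mem_dualCone C, by simp⟩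

lemma closure_sumSet_icc {A : E →ₗ[ℝ] E'} {K : Set E'} {C : Set E} :
    IsClosedConvexCone (closure ((⇑(LinearMap.adjoint A) '' dualCone K) + (-(dualCone C)))) := by
  constructor
  · exact isClosed_closure
  · exact sumSet_convex.closure
  · intro x hx t ht
    have hcont : Continuous fun v : E => t • v := continuous_const.smul continuous_id
    have h1 : t • x ∈ (fun v : E => t • v) '' closure _ := ⟨x, hx, rfl⟩
    have h2 := (image_closure_subset_closure_image hcont) h1
    refine closure_mono ?_ h2
    rintro _ ⟨v, hv, rfl⟩
    exact sumSet_smul_mem hv ht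
  · exact subset_closure sumSet_zero_mem

/-- Part 2: `recXSet = polarCone (A* K* - C*)`. -/
lemma recX_eq_polar {A : E →ₗ[ℝ] E'} {K : Set E'} {C : Set E}
    (hK : IsClosedConvexCone K) (hC : IsClosedConvexCone C) :
    recXSet A K C = polarCone ((⇑(LinearMap.adjoint A) '' dualCone K) + (-(dualCone C))) := by
  ext c
  constructor
  · rintro ⟨hcC, hcK⟩ v hv
    rw [mem_sumSet] at hv
    obtain ⟨y, hy, z, hz, rfl⟩ := hv
    have h1 : ⟪LinearMap.adjoint A y - z, c⟫ = ⟪y, A c⟫ - ⟪z, c⟫ := by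
      rw [inner_sub_left, LinearMap.adjoint_inner_left]
    have h2 : ⟪y, A c⟫ ≤ 0 := by
      have hAc : -(A c) ∈ K := Set.mem_neg.1 hcK
      have := hy (-(A c)) hAc
      rw [inner_neg_left] at this
      rw [real_inner_comm]; linarith
    have h3 : 0 ≤ ⟪z, c⟫ := by rw [real_inner_comm]; exact hz c hcC
    rw [h1]; linarith
  · intro h
    constructor
    · -- c ∈ C = C**
      rw [← dualCone_dualCone hC]
      intro z hz
      have hv : -z ∈ (⇑(LinearMap.adjoint A) '' dualCone K) + (-(dualCone C)) :=
        mem_sumSet.2 ⟨0, zero_mem_dualCone K, z, hz, by simp⟩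
      have := h (-z) hv
      rw [inner_neg_left] at this
      linarith
    · -- A c ∈ -K
      rw [Set.mem_neg, ← dualCone_dualCone hK]
      intro y hy
      have hv : LinearMap.adjoint A y ∈ (⇑(LinearMap.adjoint A) '' dualCone K) + (-(dualCone C)) :=
        mem_sumSet.2 ⟨y, hy, 0, zero_mem_dualCone C, by simp⟩
      have := h _ hv
      rw [LinearMap.adjoint_inner_left] at this
      rw [inner_neg_right]
      linarith

end Bridge

theorem stmt8 (A : E →ₗ[ℝ] E') (K : Set E') (C : Set E)
    (hK : IsClosedConvexCone K) (hC : IsClosedConvexCone C) (b : E')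
    (hXne : (Xfeas A K C b).Nonempty) :
    {r : E | ∀ x ∈ Xfeas A K C b, ∀ μ : ℝ, 0 ≤ μ → x + μ • r ∈ Xfeas A K C b} =
      recXSet A K C ∧
    recXSet A K C =
      polarCone ((⇑(LinearMap.adjoint A) '' dualCone K) + (-(dualCone C))) ∧
    polarCone (recXSet A K C) =
      closure ((⇑(LinearMap.adjoint A) '' dualCone K) + (-(dualCone C))) ∧
    {c : E | AlmostFeasY A K C c} ⊆ polarCone (recXSet A K C) ∧
    intrinsicInterior ℝ (polarCone (recXSet A K C)) ⊆ {c : E | AlmostFeasY A K C c} ∧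
    intrinsicInterior ℝ (polarCone (recXSet A K C)) =
      intrinsicInterior ℝ ((⇑(LinearMap.adjoint A) '' dualCone K) + (-(dualCone C))) ∧
    intrinsicInterior ℝ ((⇑(LinearMap.adjoint A) '' dualCone K) + (-(dualCone C))) =
      {c : E | ∃ y ∈ intrinsicInterior ℝ (dualCone K),
        LinearMap.adjoint A y - c ∈ intrinsicInterior ℝ (dualCone C)} := by
  obtain ⟨x₀, hx₀⟩ := hXne
  have hSconv : Convex ℝ ((⇑(LinearMap.adjoint A) '' dualCone K) + (-(dualCone C))) :=
    sumSet_convex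
  have part2 : recXSet A K C
      = polarCone ((⇑(LinearMap.adjoint A) '' dualCone K) + (-(dualCone C))) :=
    recX_eq_polar hK hC
  have part3 : polarCone (recXSet A K C)
      = closure ((⇑(LinearMap.adjoint A) '' dualCone K) + (-(dualCone C))) := by
    rw [part2, polarCone_polarCone,
      ← dualCone_closure ((⇑(LinearMap.adjoint A) '' dualCone K) + (-(dualCone C)))]
    exact dualCone_dualCone closure_sumSet_icc
  have part1 : {r : E | ∀ x ∈ Xfeas A K C b, ∀ μ : ℝ, 0 ≤ μ → x + μ • r ∈ Xfeas A K C b}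
      = recXSet A K C := by
    ext r
    constructor
    · intro hr
      have hmem : ∀ n : ℕ, x₀ + ((n:ℝ)+1) • r ∈ Xfeas A K C b :=
        fun n => hr x₀ hx₀ ((n:ℝ)+1) (by positivity)
      have h0 : Filter.Tendsto (fun n : ℕ => (1:ℝ) / ((n:ℝ) + 1)) Filter.atTop (nhds 0) :=
        tendsto_one_div_add_atTop_nhds_zero_nat
      constructor
      · have hseq : ∀ n : ℕ, ((1:ℝ)/((n:ℝ)+1)) • x₀ + r ∈ C := by
          intro n
          have h := hC.smul_mem (hmem n).1 (show (0:ℝ) ≤ 1/((n:ℝ)+1) by positivity)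
          have hn : ((n:ℝ)+1) ≠ 0 := by positivity
          have he : ((1:ℝ)/((n:ℝ)+1)) • (x₀ + ((n:ℝ)+1) • r) = ((1:ℝ)/((n:ℝ)+1)) • x₀ + r := by
            match_scalars <;> field_simp
          rwa [he] at h
        have htend : Filter.Tendsto (fun n : ℕ => ((1:ℝ)/((n:ℝ)+1)) • x₀ + r)
            Filter.atTop (nhds r) := by
          have := (h0.smul_const x₀).add_const r
          simpa using this
        exact hC.closed.mem_of_tendsto htend (Filter.Eventually.of_forall hseq)
      · rw [Set.mem_neg]
        have hseq : ∀ n : ℕ, ((1:ℝ)/((n:ℝ)+1)) • (b - A x₀) + -(A r) ∈ K := by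
          intro n
          have h := hK.smul_mem (hmem n).2 (show (0:ℝ) ≤ 1/((n:ℝ)+1) by positivity)
          have hn : ((n:ℝ)+1) ≠ 0 := by positivity
          have he : ((1:ℝ)/((n:ℝ)+1)) • (b - A (x₀ + ((n:ℝ)+1) • r))
              = ((1:ℝ)/((n:ℝ)+1)) • (b - A x₀) + -(A r) := by
            simp only [map_add, map_smul]
            match_scalars <;> field_simp
          rwa [he] at h
        have htend : Filter.Tendsto (fun n : ℕ => ((1:ℝ)/((n:ℝ)+1)) • (b - A x₀) + -(A r))
            Filter.atTop (nhds (-(A r))) := by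
          have := (h0.smul_const (b - A x₀)).add_const (-(A r))
          simpa using this
        exact hK.closed.mem_of_tendsto htend (Filter.Eventually.of_forall hseq)
    · rintro ⟨hrC, hrK⟩ x ⟨hxC, hxK⟩ μ hμ
      refine ⟨hC.add_mem' hxC (hC.smul_mem hrC hμ), ?_⟩
      have he : b - A (x + μ • r) = (b - A x) + μ • (-(A r)) := by
        simp only [map_add, map_smul]; module
      rw [he]
      exact hK.add_mem' hxK (hK.smul_mem (Set.mem_neg.1 hrK) hμ)
  have part4 : {c : E | AlmostFeasY A K C c} ⊆ polarCone (recXSet A K C) := by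
    intro c hc r hr
    obtain ⟨hrC, hrK⟩ := hr
    have key : ∀ ε : ℝ, 0 < ε → ⟪r, c⟫ ≤ 0 + ε := by
      intro ε hε
      obtain ⟨cε, hcεnorm, y, hyK, hyC⟩ := hc (ε / (‖r‖ + 1)) (by positivity)
      have h1 : ⟪r, c⟫ = ⟪A r, y⟫ - ⟪r, LinearMap.adjoint A y - (c + cε)⟫ - ⟪r, cε⟫ := by
        have ha : ⟪r, LinearMap.adjoint A y - (c + cε)⟫
            = ⟪r, LinearMap.adjoint A y⟫ - ⟪r, c⟫ - ⟪r, cε⟫ := by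
          rw [inner_sub_right, inner_add_right]; ring
        have hb : ⟪r, LinearMap.adjoint A y⟫ = ⟪A r, y⟫ := by
          rw [real_inner_comm, LinearMap.adjoint_inner_left, real_inner_comm]
        rw [ha, hb]; ring
      have h2 : ⟪A r, y⟫ ≤ 0 := by
        have := hyK (-(A r)) (Set.mem_neg.1 hrK)
        rw [inner_neg_left] at this
        linarith
      have h3 : 0 ≤ ⟪r, LinearMap.adjoint A y - (c + cε)⟫ := hyC r hrC
      have h4 : -⟪r, cε⟫ ≤ ε := by
        have habs := abs_real_inner_le_norm r cε
        have hnr : (0:ℝ) ≤ ‖r‖ := norm_nonneg r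
        have hnc : (0:ℝ) ≤ ‖cε‖ := norm_nonneg cε
        have hb : ‖r‖ * ‖cε‖ ≤ ‖r‖ * (ε / (‖r‖ + 1)) :=
          mul_le_mul_of_nonneg_left hcεnorm hnr
        have hb2 : ‖r‖ * (ε / (‖r‖ + 1)) ≤ ε := by
          rw [mul_div_assoc']
          rw [div_le_iff₀ (by positivity)]
          nlinarith
        have := neg_abs_le (⟪r, cε⟫ : ℝ)
        linarith
      linarith
    have := le_of_forall_pos_le_add (a := (⟪r, c⟫ : ℝ)) (b := 0) ?_
    · linarith
    · intro ε hε; linarith [key ε hε]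
  have part5 : intrinsicInterior ℝ (polarCone (recXSet A K C))
      ⊆ {c : E | AlmostFeasY A K C c} := by
    intro c hc
    rw [part3, relint_closure_eq hSconv] at hc
    have hcS := intrinsicInterior_subset hc
    obtain ⟨y, hy, z, hz, rfl⟩ := mem_sumSet.1 hcS
    intro ε hε
    refine ⟨0, by simp [le_of_lt hε], y, hy, ?_⟩
    simpa using hz
  have part6 : intrinsicInterior ℝ (polarCone (recXSet A K C))
      = intrinsicInterior ℝ ((⇑(LinearMap.adjoint A) '' dualCone K) + (-(dualCone C))) := by
    rw [part3, relint_closure_eq hSconv]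
  have part7 : intrinsicInterior ℝ ((⇑(LinearMap.adjoint A) '' dualCone K) + (-(dualCone C)))
      = {c : E | ∃ y ∈ intrinsicInterior ℝ (dualCone K),
        LinearMap.adjoint A y - c ∈ intrinsicInterior ℝ (dualCone C)} := by
    set g : (E' × E) →ₗ[ℝ] E :=
      (LinearMap.adjoint A).comp (LinearMap.fst ℝ E' E) - LinearMap.snd ℝ E' E with hg
    have hgapp : ∀ p : E' × E, g p = LinearMap.adjoint A p.1 - p.2 := fun p => rfl
    have hSim : (⇑(LinearMap.adjoint A) '' dualCone K) + (-(dualCone C))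
        = ⇑g '' (dualCone K ×ˢ dualCone C) := by
      ext c
      rw [mem_sumSet]
      constructor
      · rintro ⟨y, hy, z, hz, rfl⟩
        exact ⟨(y, z), ⟨hy, hz⟩, rfl⟩
      · rintro ⟨⟨y, z⟩, ⟨hy, hz⟩, rfl⟩
        exact ⟨y, hy, z, hz, rfl⟩
    rw [hSim, ← relint_linear_image g ((dualCone_convex K).prod (dualCone_convex C)),
      relint_prod (dualCone_convex K) (dualCone_convex C) ⟨0, zero_mem_dualCone K⟩
        ⟨0, zero_mem_dualCone C⟩]
    ext c
    constructor
    · rintro ⟨⟨y, z⟩, ⟨hy, hz⟩, rfl⟩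
      refine ⟨y, hy, ?_⟩
      have : LinearMap.adjoint A y - g (y, z) = z := by rw [hgapp]; module
      rwa [this]
    · rintro ⟨y, hy, hz⟩
      exact ⟨(y, LinearMap.adjoint A y - c), ⟨hy, hz⟩, by rw [hgapp]; module⟩
  exact ⟨part1, part2, part3, part4, part5, part6, part7⟩
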